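/- Let d ∈ ℕ, let ν₁,…,ν_d ∈ ℕ, and let ω^{(i)} ∈ ℝ^{ν_i} be non-resonant for each i. Let 2 ≤ p < ∞, T ∈ (0,1], δ ≥ 0, s ≥ 0, C ≥ 1, and K > 0. Suppose that for every c : ℤ^{ν₁}×…×ℤ^{ν_d} → ℂ supported in {n : |n| ≤ C} one has limsup_{L→∞} (1/(2L)^d) ∫_0^T ∫_{[−L,L]^d} | ∑_n c_n e^{i(⟨n⟩_ω · x − t|⟨n⟩_ω|²)} |^p dx dt ≤ (K T^δ C^s)^p ( ∑_n |c_n|² )^{p/2}. Then for every a ∈ ℤ^{ν₁}×…×ℤ^{ν_d} and every c supported in {n : |n − a| ≤ C} the same estimate holds with the same constant K. (Galilean invariance of quasi-periodic Strichartz estimates, Proposition 5.3.) -/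

import Mathlib

open MeasureTheory Filter

/-- The `i`-th component `⟨n_i⟩_{ω^{(i)}} = n_i · ω^{(i)}` of the frequency vector of a
multi-index `n ∈ ℤ^{ν₁} × … × ℤ^{ν_d}`. -/
noncomputable def freqVec {d : ℕ} {ν : Fin d → ℕ} (ω : ∀ i, Fin (ν i) → ℝ)
    (n : ∀ i, Fin (ν i) → ℤ) (i : Fin d) : ℝ :=
  ∑ j, (n i j : ℝ) * ω i j

/-- The height `|n|` (Euclidean norm of the full integer vector) of a multi-index. -/
noncomputable def heightVec {d : ℕ} {ν : Fin d → ℕ} (n : ∀ i, Fin (ν i) → ℤ) : ℝ :=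
  Real.sqrt (∑ i, ∑ j, ((n i j : ℝ)) ^ 2)

/-- The mean `L^p_{t,x}([0,T] × ℝ^d)` norm (raised to the power `p`) of the free
Schrödinger evolution of the quasi-periodic trigonometric polynomial with
coefficients `c`, expressed as a limsup of averages. -/
noncomputable def strichartzAvg (d : ℕ) (ν : Fin d → ℕ) (ω : ∀ i, Fin (ν i) → ℝ)
    (p T : ℝ) (c : (∀ i, Fin (ν i) → ℤ) → ℂ) : ℝ :=
  limsup (fun L : ℝ =>
    (1 / (2 * L) ^ d) * ∫ t in Set.Icc (0 : ℝ) T,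
      ∫ x in (Set.univ.pi fun _ : Fin d => Set.Icc (-L) L),
        ‖∑' n : ∀ i, Fin (ν i) → ℤ, c n *
          Complex.exp (Complex.I *
            ((∑ i, freqVec ω n i * x i - t * ∑ i, freqVec ω n i ^ 2 : ℝ) : ℂ))‖ ^ p)
    atTop

section GalileanAux

lemma ball_finite {d : ℕ} {ν : Fin d → ℕ} (C : ℝ) :
    {m : ∀ i, Fin (ν i) → ℤ | heightVec m ≤ C}.Finite := by
  have : {m : ∀ i, Fin (ν i) → ℤ | heightVec m ≤ C} ⊆
      Set.pi Set.univ (fun i => Set.pi Set.univ (fun _ : Fin (ν i) => Set.Icc (-⌈C⌉) ⌈C⌉)) := by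
    intro m hm i _ j _
    simp only [Set.mem_setOf_eq, heightVec] at hm
    have hC0 : (0:ℝ) ≤ C := le_trans (Real.sqrt_nonneg _) hm
    have hsum : (∑ i, ∑ j, ((m i j : ℝ)) ^ 2) ≤ C ^ 2 := by
      have h1 : Real.sqrt (∑ i, ∑ j, ((m i j : ℝ)) ^ 2) ^ 2 ≤ C ^ 2 :=
        pow_le_pow_left₀ (Real.sqrt_nonneg _) hm 2
      rwa [Real.sq_sqrt (by positivity)] at h1
    have hterm : ((m i j : ℝ)) ^ 2 ≤ C ^ 2 := by
      refine le_trans ?_ hsum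
      calc ((m i j : ℝ)) ^ 2 ≤ ∑ j', ((m i j' : ℝ)) ^ 2 :=
            Finset.single_le_sum (f := fun j' => ((m i j' : ℝ)) ^ 2)
              (fun _ _ => by positivity) (Finset.mem_univ j)
        _ ≤ ∑ i', ∑ j', ((m i' j' : ℝ)) ^ 2 :=
            Finset.single_le_sum (f := fun i' => ∑ j', ((m i' j' : ℝ)) ^ 2)
              (fun _ _ => by positivity) (Finset.mem_univ i)
    have habs : |(m i j : ℝ)| ≤ C := abs_le_of_sq_le_sq hterm hC0
    have : |(m i j : ℝ)| ≤ (⌈C⌉ : ℝ) := habs.trans (Int.le_ceil C)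
    rw [← Int.cast_abs, Int.cast_le] at this
    simpa [Set.mem_Icc] using abs_le.mp this
  exact Set.Finite.subset
    (Set.Finite.pi (fun i => Set.Finite.pi (fun _ => Set.finite_Icc _ _))) this

lemma freqVec_add {d : ℕ} {ν : Fin d → ℕ} (ω : ∀ i, Fin (ν i) → ℝ)
    (m a : ∀ i, Fin (ν i) → ℤ) (i : Fin d) :
    freqVec ω (m + a) i = freqVec ω m i + freqVec ω a i := by
  simp only [freqVec, Pi.add_apply, Int.cast_add, ← Finset.sum_add_distrib]
  exact Finset.sum_congr rfl fun j _ => by ring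

lemma phase_split {d : ℕ} {ν : Fin d → ℕ} (ω : ∀ i, Fin (ν i) → ℝ)
    (m a : ∀ i, Fin (ν i) → ℤ) (t : ℝ) (x : Fin d → ℝ) :
    (∑ i, freqVec ω (m + a) i * x i - t * ∑ i, freqVec ω (m + a) i ^ 2)
      = (∑ i, freqVec ω m i * (x i - 2 * t * freqVec ω a i)
          - t * ∑ i, freqVec ω m i ^ 2)
        + (∑ i, freqVec ω a i * x i - t * ∑ i, freqVec ω a i ^ 2) := by
  simp only [freqVec_add, Finset.mul_sum, ← Finset.sum_sub_distrib, ← Finset.sum_add_distrib]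
  exact Finset.sum_congr rfl fun i _ => by ring

lemma norm_exp_I_real (r : ℝ) : ‖Complex.exp (Complex.I * (r : ℂ))‖ = 1 := by
  rw [mul_comm, Complex.norm_exp_ofReal_mul_I]

lemma norm_sum_shift {d : ℕ} {ν : Fin d → ℕ} (ω : ∀ i, Fin (ν i) → ℝ)
    (a : ∀ i, Fin (ν i) → ℤ) (c : (∀ i, Fin (ν i) → ℤ) → ℂ)
    (G₀ : Finset (∀ i, Fin (ν i) → ℤ)) (t : ℝ) (x : Fin d → ℝ) :
    ‖∑ n ∈ G₀.image (· + a), c n *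
        Complex.exp (Complex.I *
          ((∑ i, freqVec ω n i * x i - t * ∑ i, freqVec ω n i ^ 2 : ℝ) : ℂ))‖
    = ‖∑ m ∈ G₀, c (m + a) *
        Complex.exp (Complex.I *
          ((∑ i, freqVec ω m i * (x i - 2 * t * freqVec ω a i)
              - t * ∑ i, freqVec ω m i ^ 2 : ℝ) : ℂ))‖ := by
  rw [Finset.sum_image (fun y _ z _ h => by simpa using h)]
  have : ∀ m : ∀ i, Fin (ν i) → ℤ,
      c (m + a) * Complex.exp (Complex.I *
        ((∑ i, freqVec ω (m + a) i * x i - t * ∑ i, freqVec ω (m + a) i ^ 2 : ℝ) : ℂ))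
      = (c (m + a) * Complex.exp (Complex.I *
          ((∑ i, freqVec ω m i * (x i - 2 * t * freqVec ω a i)
              - t * ∑ i, freqVec ω m i ^ 2 : ℝ) : ℂ)))
        * Complex.exp (Complex.I *
          ((∑ i, freqVec ω a i * x i - t * ∑ i, freqVec ω a i ^ 2 : ℝ) : ℂ)) := by
    intro m
    rw [phase_split ω m a t x, Complex.ofReal_add, mul_add, Complex.exp_add]
    ring
  simp only [this, ← Finset.sum_mul]
  rw [norm_mul, norm_exp_I_real, mul_one]

lemma setIntegral_shift_le {d : ℕ} (h : (Fin d → ℝ) → ℝ) (hcont : Continuous h)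
    (hh0 : ∀ y, 0 ≤ h y) (v : Fin d → ℝ) (L M : ℝ) (hv : ∀ i, |v i| ≤ M) :
    (∫ x in Set.univ.pi (fun _ : Fin d => Set.Icc (-L) L), h (x - v))
      ≤ ∫ y in Set.univ.pi (fun _ : Fin d => Set.Icc (-(L+M)) (L+M)), h y := by
  set box : Set (Fin d → ℝ) := Set.univ.pi (fun _ : Fin d => Set.Icc (-L) L) with hbox
  set bigbox : Set (Fin d → ℝ) :=
    Set.univ.pi (fun _ : Fin d => Set.Icc (-(L+M)) (L+M)) with hbig
  have hmb : MeasurableSet box := MeasurableSet.univ_pi (fun _ => measurableSet_Icc)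
  have hmbig : MeasurableSet bigbox := MeasurableSet.univ_pi (fun _ => measurableSet_Icc)
  rw [← integral_indicator hmb, ← integral_indicator hmbig]
  have key : (∫ x, box.indicator (fun x' => h (x' - v)) (x + v))
      = ∫ x, box.indicator (fun x' => h (x' - v)) x :=
    integral_add_right_eq_self _ v
  rw [← key]
  refine integral_mono_of_nonneg (Filter.Eventually.of_forall fun y => ?_)
    ((integrable_indicator_iff hmbig).2
      (hcont.locallyIntegrable.integrableOn_isCompact (isCompact_univ_pi fun _ => isCompact_Icc)))
    (Filter.Eventually.of_forall fun y => ?_)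
  · exact Set.indicator_nonneg (fun x' _ => hh0 _) _
  · show box.indicator (fun x' => h (x' - v)) (y + v) ≤ bigbox.indicator h y
    by_cases hy : y + v ∈ box
    · rw [Set.indicator_of_mem hy]
      have hyy : y ∈ bigbox := by
        intro i _
        have := hy i (Set.mem_univ i)
        simp only [Set.mem_Icc, Pi.add_apply] at this ⊢
        have hvi := abs_le.mp (hv i)
        constructor <;> nlinarith [this.1, this.2, hvi.1, hvi.2]
      rw [Set.indicator_of_mem hyy]
      simp
    · rw [Set.indicator_of_notMem hy]
      
      exact Set.indicator_nonneg (fun x' _ => hh0 _) _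

lemma t_integral_le {d : ℕ} (T : ℝ)
    (G : ℝ → (Fin d → ℝ) → ℝ) (hGcont : Continuous (Function.uncurry G))
    (hG0 : ∀ t y, 0 ≤ G t y) (Bp : ℝ) (hGB : ∀ t y, G t y ≤ Bp)
    (Fc : ℝ → (Fin d → ℝ) → ℝ) (hFc0 : ∀ t x, 0 ≤ Fc t x)
    (v : ℝ → Fin d → ℝ) (hFc : ∀ t x, Fc t x = G t (x - v t))
    (M L : ℝ) (hv : ∀ t ∈ Set.Icc (0:ℝ) T, ∀ i, |v t i| ≤ M) :
    (∫ t in Set.Icc (0:ℝ) T,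
        ∫ x in Set.univ.pi (fun _ : Fin d => Set.Icc (-L) L), Fc t x)
    ≤ ∫ t in Set.Icc (0:ℝ) T,
        ∫ x in Set.univ.pi (fun _ : Fin d => Set.Icc (-(L+M)) (L+M)), G t x := by
  set bigbox : Set (Fin d → ℝ) :=
    Set.univ.pi (fun _ : Fin d => Set.Icc (-(L+M)) (L+M)) with hbig
  have hmbig : MeasurableSet bigbox := MeasurableSet.univ_pi (fun _ => measurableSet_Icc)
  have hcompact : IsCompact bigbox := isCompact_univ_pi fun _ => isCompact_Icc
  have hvolb : volume bigbox < ⊤ := hcompact.measure_lt_top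
  -- measurability of the parametric integral
  have hmeas : StronglyMeasurable (fun t => ∫ y in bigbox, G t y) := by
    have := (hGcont.stronglyMeasurable).integral_prod_right
      (ν := volume.restrict bigbox)
    exact this
  haveI : IsFiniteMeasure (volume.restrict (Set.Icc (0:ℝ) T)) :=
    ⟨by rw [Measure.restrict_apply_univ]; exact isCompact_Icc.measure_lt_top⟩
  have hBp0 : 0 ≤ Bp := le_trans (hG0 0 0) (hGB 0 0)
  have hint : Integrable (fun t => ∫ y in bigbox, G t y)
      (volume.restrict (Set.Icc (0:ℝ) T)) := by
    refine Integrable.mono' (integrable_const ((volume bigbox).toReal * Bp))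
      hmeas.aestronglyMeasurable (Filter.Eventually.of_forall fun t => ?_)
    have hnn : (0:ℝ) ≤ ∫ y in bigbox, G t y := integral_nonneg fun y => hG0 t y
    rw [Real.norm_eq_abs, abs_of_nonneg hnn]
    have := norm_setIntegral_le_of_norm_le_const (f := fun y => G t y) (C := Bp) hvolb
      (fun y _ => by rw [Real.norm_eq_abs, abs_of_nonneg (hG0 t y)]; exact hGB t y)
    rw [Real.norm_eq_abs, abs_of_nonneg hnn, measureReal_def] at this
    linarith [this]
  refine integral_mono_of_nonneg (Filter.Eventually.of_forall fun t =>
      integral_nonneg fun x => hFc0 t x) hint ?_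
  rw [Filter.EventuallyLE, ae_restrict_iff' measurableSet_Icc]
  refine Filter.Eventually.of_forall fun t ht => ?_
  have h1 : (∫ x in Set.univ.pi (fun _ : Fin d => Set.Icc (-L) L), Fc t x)
      = ∫ x in Set.univ.pi (fun _ : Fin d => Set.Icc (-L) L), G t (x - v t) := by
    exact integral_congr_ae (Filter.Eventually.of_forall fun x => hFc t x)
  rw [h1]
  exact setIntegral_shift_le (G t) (hGcont.comp (Continuous.prodMk_right t)) (hG0 t)
    (v t) L M (hv t ht)

lemma box_volume {d : ℕ} (L : ℝ) (hL : 0 ≤ L) :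
    (volume (Set.univ.pi (fun _ : Fin d => Set.Icc (-L) L))).toReal = (2 * L) ^ d := by
  rw [volume_pi_pi]
  simp only [Real.volume_Icc]
  rw [Finset.prod_const, Finset.card_univ, Fintype.card_fin]
  have h2 : L - -L = 2 * L := by ring
  rw [h2, ← ENNReal.ofReal_pow (by linarith), ENNReal.toReal_ofReal (by positivity)]

lemma t_integral_bound {d : ℕ} (T Bp L : ℝ) (hT0 : 0 ≤ T) (hL : 0 ≤ L) (hBp : 0 ≤ Bp)
    (G : ℝ → (Fin d → ℝ) → ℝ) (hGcont : Continuous (Function.uncurry G))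
    (hG0 : ∀ t y, 0 ≤ G t y) (hGB : ∀ t y, G t y ≤ Bp) :
    (∫ t in Set.Icc (0:ℝ) T,
        ∫ x in Set.univ.pi (fun _ : Fin d => Set.Icc (-L) L), G t x)
    ≤ T * ((2 * L) ^ d * Bp) := by
  set box : Set (Fin d → ℝ) := Set.univ.pi (fun _ : Fin d => Set.Icc (-L) L) with hbox
  have hcompact : IsCompact box := isCompact_univ_pi fun _ => isCompact_Icc
  have hvolb : volume box < ⊤ := hcompact.measure_lt_top
  haveI : IsFiniteMeasure (volume.restrict (Set.Icc (0:ℝ) T)) :=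
    ⟨by rw [Measure.restrict_apply_univ]; exact isCompact_Icc.measure_lt_top⟩
  have hbd : ∀ t, (∫ x in box, G t x) ≤ (2 * L) ^ d * Bp := by
    intro t
    have := norm_setIntegral_le_of_norm_le_const (f := fun y => G t y) (C := Bp) hvolb
      (fun y _ => by rw [Real.norm_eq_abs, abs_of_nonneg (hG0 t y)]; exact hGB t y)
    rw [Real.norm_eq_abs, abs_of_nonneg (integral_nonneg fun y => hG0 t y)] at this
    calc (∫ x in box, G t x) ≤ Bp * (volume box).toReal := this
      _ = (2 * L) ^ d * Bp := by rw [box_volume L hL]; ring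
  calc (∫ t in Set.Icc (0:ℝ) T, ∫ x in box, G t x)
      ≤ ∫ _ in Set.Icc (0:ℝ) T, ((2 * L) ^ d * Bp) := by
        refine integral_mono_of_nonneg (Filter.Eventually.of_forall fun t =>
          integral_nonneg fun x => hG0 t x) (integrable_const _)
          (Filter.Eventually.of_forall fun t => hbd t)
    _ = T * ((2 * L) ^ d * Bp) := by
        rw [setIntegral_const, measureReal_def, Real.volume_Icc, smul_eq_mul, sub_zero,
          ENNReal.toReal_ofReal hT0]

lemma limsup_avg_le (d : ℕ) (fc f' : ℝ → ℝ) (M D : ℝ) (hM : 0 ≤ M) (hD : 0 ≤ D)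
    (hf'0 : ∀ L, 0 < L → 0 ≤ f' L) (hfc0 : ∀ L, 0 < L → 0 ≤ fc L) (hf'D : ∀ L, 0 < L → f' L ≤ D)
    (hle : ∀ L, 0 < L → fc L ≤ ((L + M)/L)^d * f' (L + M)) :
    limsup fc atTop ≤ limsup f' atTop := by
  refine le_of_forall_pos_le_add fun ε hε => ?_
  have hq : Tendsto (fun L : ℝ => ((L + M)/L)^d) atTop (nhds 1) := by
    have h1 : Tendsto (fun L : ℝ => (L+M)/L) atTop (nhds 1) := by
      have heq : (fun L : ℝ => (L+M)/L) =ᶠ[atTop] fun L => 1 + M * L⁻¹ := by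
        filter_upwards [eventually_gt_atTop (0:ℝ)] with L hL
        field_simp
      rw [tendsto_congr' heq]
      have h2 := tendsto_inv_atTop_zero.const_mul M
      have h3 := (tendsto_const_nhds (x := (1:ℝ)) (f := atTop)).add h2
      simpa using h3
    have := h1.pow d
    simpa using this
  have hqe : ∀ᶠ L in atTop, (((L + M)/L)^d - 1) * D < ε := by
    have h2 : Tendsto (fun L : ℝ => (((L + M)/L)^d - 1) * D) atTop (nhds 0) := by
      have := (hq.sub (tendsto_const_nhds (x := (1:ℝ)))).mul_const D
      simpa using this
    exact h2.eventually (eventually_lt_nhds hε)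
  have hmain : ∀ᶠ L in atTop, fc L ≤ f' (L + M) + ε := by
    filter_upwards [eventually_gt_atTop (0:ℝ), hqe] with L hL hqL
    have hLM0 : 0 < L + M := by linarith
    have h1 : fc L ≤ ((L + M)/L)^d * f' (L+M) := hle L hL
    have hq1 : 1 ≤ ((L + M)/L)^d := one_le_pow₀ ((one_le_div hL).mpr (by linarith))
    have h3 : (((L+M)/L)^d - 1) * f' (L+M) ≤ (((L+M)/L)^d - 1) * D :=
      mul_le_mul_of_nonneg_left (hf'D _ hLM0) (by linarith)
    nlinarith [hf'0 _ hLM0]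
  have hshift0 : ∀ᶠ L in atTop, (0:ℝ) ≤ f' (L + M) := by
    filter_upwards [eventually_gt_atTop (0:ℝ)] with L hL
    exact hf'0 _ (by linarith)
  have hshiftD : ∀ᶠ L in atTop, f' (L + M) ≤ D := by
    filter_upwards [eventually_gt_atTop (0:ℝ)] with L hL
    exact hf'D _ (by linarith)
  have cobdd_fc : IsCoboundedUnder (· ≤ ·) atTop fc :=
    isCoboundedUnder_le_of_eventually_le atTop (x := 0)
      (by filter_upwards [eventually_gt_atTop (0:ℝ)] with L hL; exact hfc0 L hL)
  calc limsup fc atTop ≤ limsup (fun L => f' (L + M) + ε) atTop := by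
        refine limsup_le_limsup hmain cobdd_fc ?_
        exact isBoundedUnder_of_eventually_le (a := D + ε)
          (by filter_upwards [hshiftD] with L h; linarith)
    _ = limsup (fun L => f' (L + M)) atTop + ε := by
        refine limsup_add_const atTop _ ε ?_ ?_
        · exact isBoundedUnder_of_eventually_le (a := D) hshiftD
        · exact isCoboundedUnder_le_of_eventually_le atTop (x := 0) hshift0
    _ = limsup f' atTop + ε := by
        have hmap : Filter.map (fun L : ℝ => L + M) atTop = atTop :=
          (OrderIso.addRight M).map_atTop
        rw [show (fun L => f' (L + M)) = f' ∘ (fun L : ℝ => L + M) from rfl,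
          Filter.limsup_comp, hmap]

end GalileanAux

/-- Galilean invariance of quasi-periodic Strichartz estimates (Proposition 5.3):
if the Strichartz estimate holds for data of height at most `C`, then it holds with
the same constant for data whose height index lies in any ball `{|n − a| ≤ C}`. -/
theorem galilean_invariance_strichartz
    (d : ℕ) (hd : 1 ≤ d) (ν : Fin d → ℕ) (hν : ∀ i, 1 ≤ ν i)
    (ω : ∀ i, Fin (ν i) → ℝ)
    (hpos : ∀ i j, 0 < ω i j)
    (hnr : ∀ i, ∀ m : Fin (ν i) → ℤ, (∑ j, (m j : ℝ) * ω i j) = 0 → m = 0)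
    (p : ℝ) (hp : 2 ≤ p) (T : ℝ) (hT : T ∈ Set.Ioc (0 : ℝ) 1)
    (δ : ℝ) (hδ : 0 ≤ δ) (s : ℝ) (hs : 0 ≤ s) (C : ℝ) (hC : 1 ≤ C)
    (K : ℝ) (hK : 0 < K)
    (hyp : ∀ c : (∀ i, Fin (ν i) → ℤ) → ℂ,
      (∀ n, c n ≠ 0 → heightVec n ≤ C) →
      strichartzAvg d ν ω p T c
        ≤ (K * T ^ δ * C ^ s) ^ p * (∑' n, ‖c n‖ ^ 2) ^ (p / 2)) :
    ∀ a : ∀ i, Fin (ν i) → ℤ,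
      ∀ c : (∀ i, Fin (ν i) → ℤ) → ℂ,
        (∀ n, c n ≠ 0 → heightVec (n - a) ≤ C) →
        strichartzAvg d ν ω p T c
          ≤ (K * T ^ δ * C ^ s) ^ p * (∑' n, ‖c n‖ ^ 2) ^ (p / 2) := by
  intro a c hsupp
  obtain ⟨hT0, hT1⟩ := hT
  have hp0 : (0:ℝ) ≤ p := le_trans (by norm_num) hp
  -- shifted coefficients
  have hsupp' : ∀ m : ∀ i, Fin (ν i) → ℤ, c (m + a) ≠ 0 → heightVec m ≤ C := by
    intro m hm
    have := hsupp (m + a) hm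
    simpa using this
  have hyp' := hyp (fun m => c (m + a)) hsupp'
  have hsq : (∑' n : ∀ i, Fin (ν i) → ℤ, ‖c (n + a)‖ ^ 2) = ∑' n, ‖c n‖ ^ 2 := by
    simpa using (Equiv.addRight a).tsum_eq (fun n : ∀ i, Fin (ν i) → ℤ => ‖c n‖ ^ 2)
  rw [hsq] at hyp'
  refine le_trans ?_ hyp'
  -- the finite support sets
  have hfin := ball_finite (d := d) (ν := ν) C
  set G₀ : Finset (∀ i, Fin (ν i) → ℤ) := hfin.toFinset with hG₀def
  have htsum' : ∀ (t : ℝ) (x : Fin d → ℝ),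
      (∑' n : ∀ i, Fin (ν i) → ℤ, c (n + a) *
        Complex.exp (Complex.I *
          ((∑ i, freqVec ω n i * x i - t * ∑ i, freqVec ω n i ^ 2 : ℝ) : ℂ)))
      = ∑ m ∈ G₀, c (m + a) *
        Complex.exp (Complex.I *
          ((∑ i, freqVec ω m i * x i - t * ∑ i, freqVec ω m i ^ 2 : ℝ) : ℂ)) := by
    intro t x
    refine tsum_eq_sum fun n hn => ?_
    have : c (n + a) = 0 := by
      by_contra h
      exact hn (hfin.mem_toFinset.mpr (hsupp' n h))
    rw [this, zero_mul]
  have htsum : ∀ (t : ℝ) (x : Fin d → ℝ),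
      (∑' n : ∀ i, Fin (ν i) → ℤ, c n *
        Complex.exp (Complex.I *
          ((∑ i, freqVec ω n i * x i - t * ∑ i, freqVec ω n i ^ 2 : ℝ) : ℂ)))
      = ∑ n ∈ G₀.image (· + a), c n *
        Complex.exp (Complex.I *
          ((∑ i, freqVec ω n i * x i - t * ∑ i, freqVec ω n i ^ 2 : ℝ) : ℂ)) := by
    intro t x
    refine tsum_eq_sum fun n hn => ?_
    have : c n = 0 := by
      by_contra h
      refine hn (Finset.mem_image.mpr ⟨n - a, ?_, by abel⟩)
      exact hfin.mem_toFinset.mpr (hsupp n h)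
    rw [this, zero_mul]
  -- the shifted evolution and its properties
  set B : ℝ := ∑ m ∈ G₀, ‖c (m + a)‖ with hBdef
  have hB0 : 0 ≤ B := Finset.sum_nonneg fun _ _ => norm_nonneg _
  set G : ℝ → (Fin d → ℝ) → ℝ := fun t y =>
    ‖∑ m ∈ G₀, c (m + a) *
      Complex.exp (Complex.I *
        ((∑ i, freqVec ω m i * y i - t * ∑ i, freqVec ω m i ^ 2 : ℝ) : ℂ))‖ ^ p
    with hGdef
  have hGcont : Continuous (Function.uncurry G) := by
    refine Continuous.rpow_const ?_ (fun q => Or.inr hp0)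
    refine Continuous.norm ?_
    refine continuous_finset_sum _ fun m _ => Continuous.mul continuous_const ?_
    refine Complex.continuous_exp.comp (Continuous.mul continuous_const ?_)
    refine Complex.continuous_ofReal.comp ?_
    refine Continuous.sub ?_ (Continuous.mul continuous_fst continuous_const)
    exact continuous_finset_sum _ fun i _ =>
      Continuous.mul continuous_const ((continuous_apply i).comp continuous_snd)
  have hG0 : ∀ t y, 0 ≤ G t y := fun t y => Real.rpow_nonneg (norm_nonneg _) _
  have hGB : ∀ t y, G t y ≤ B ^ p := by
    intro t y
    refine Real.rpow_le_rpow (norm_nonneg _) ?_ hp0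
    refine le_trans (norm_sum_le _ _) (le_of_eq (Finset.sum_congr rfl fun m _ => ?_))
    rw [norm_mul, norm_exp_I_real, mul_one]
  -- the Galilean shift
  set v : ℝ → Fin d → ℝ := fun t i => 2 * t * freqVec ω a i with hvdef
  set M : ℝ := 2 * ∑ i, |freqVec ω a i| with hMdef
  have hM : 0 ≤ M := by positivity
  have hv : ∀ t ∈ Set.Icc (0:ℝ) T, ∀ i, |v t i| ≤ M := by
    intro t ht i
    obtain ⟨ht0, htT⟩ := ht
    have h1 : |freqVec ω a i| ≤ ∑ i', |freqVec ω a i'| :=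
      Finset.single_le_sum (f := fun i' => |freqVec ω a i'|)
        (fun _ _ => abs_nonneg _) (Finset.mem_univ i)
    have h2 : |v t i| = 2 * t * |freqVec ω a i| := by
      rw [hvdef]
      rw [abs_mul, abs_mul]
      rw [abs_of_nonneg (by norm_num : (0:ℝ) ≤ 2), abs_of_nonneg ht0]
    rw [h2, hMdef]
    nlinarith [abs_nonneg (freqVec ω a i), htT.trans hT1]
  -- pointwise identity
  have hFc : ∀ (t : ℝ) (x : Fin d → ℝ),
      ‖∑ n ∈ G₀.image (· + a), c n *
        Complex.exp (Complex.I *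
          ((∑ i, freqVec ω n i * x i - t * ∑ i, freqVec ω n i ^ 2 : ℝ) : ℂ))‖ ^ p
      = G t (x - v t) := by
    intro t x
    rw [norm_sum_shift ω a c G₀ t x]
    rfl
  -- core integral inequality
  have hIcore : ∀ L : ℝ,
      (∫ t in Set.Icc (0:ℝ) T,
        ∫ x in (Set.univ.pi fun _ : Fin d => Set.Icc (-L) L),
          ‖∑ n ∈ G₀.image (· + a), c n *
            Complex.exp (Complex.I *
              ((∑ i, freqVec ω n i * x i - t * ∑ i, freqVec ω n i ^ 2 : ℝ) : ℂ))‖ ^ p)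
      ≤ ∫ t in Set.Icc (0:ℝ) T,
          ∫ x in (Set.univ.pi fun _ : Fin d => Set.Icc (-(L+M)) (L+M)), G t x := by
    intro L
    exact t_integral_le T G hGcont hG0 (B ^ p) hGB _
      (fun t x => Real.rpow_nonneg (norm_nonneg _) _) v hFc M L hv
  -- nonnegativity and boundedness of the averaged integrals
  have hInn0 : ∀ (cc : (∀ i, Fin (ν i) → ℤ) → ℂ) (L : ℝ), (0:ℝ) ≤
      ∫ t in Set.Icc (0:ℝ) T,
        ∫ x in (Set.univ.pi fun _ : Fin d => Set.Icc (-L) L),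
          ‖∑' n : ∀ i, Fin (ν i) → ℤ, cc n *
            Complex.exp (Complex.I *
              ((∑ i, freqVec ω n i * x i - t * ∑ i, freqVec ω n i ^ 2 : ℝ) : ℂ))‖ ^ p :=
    fun cc L => integral_nonneg fun t => integral_nonneg fun x =>
      Real.rpow_nonneg (norm_nonneg _) _
  -- now compare the two limsups
  simp only [strichartzAvg]
  have hrw : ∀ (L : ℝ) (t : ℝ) (x : Fin d → ℝ), True := fun _ _ _ => trivial
  calc limsup (fun L : ℝ =>
        (1 / (2 * L) ^ d) * ∫ t in Set.Icc (0 : ℝ) T,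
          ∫ x in (Set.univ.pi fun _ : Fin d => Set.Icc (-L) L),
            ‖∑' n : ∀ i, Fin (ν i) → ℤ, c n *
              Complex.exp (Complex.I *
                ((∑ i, freqVec ω n i * x i - t * ∑ i, freqVec ω n i ^ 2 : ℝ) : ℂ))‖ ^ p)
        atTop
      ≤ limsup (fun L : ℝ =>
        (1 / (2 * L) ^ d) * ∫ t in Set.Icc (0 : ℝ) T,
          ∫ x in (Set.univ.pi fun _ : Fin d => Set.Icc (-L) L),
            ‖∑' n : ∀ i, Fin (ν i) → ℤ, c (n + a) *
              Complex.exp (Complex.I *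
                ((∑ i, freqVec ω n i * x i - t * ∑ i, freqVec ω n i ^ 2 : ℝ) : ℂ))‖ ^ p)
        atTop := ?_
    _ ≤ _ := le_rfl
  simp only [htsum, htsum']
  refine limsup_avg_le d _ _ M (T * B ^ p) hM (by positivity) ?_ ?_ ?_ ?_
  · -- 0 ≤ f' L for L > 0
    intro L hL
    have h1 : (0:ℝ) ≤ 1 / (2 * L) ^ d := by positivity
    refine mul_nonneg h1 (integral_nonneg fun t => integral_nonneg fun x =>
      Real.rpow_nonneg (norm_nonneg _) _)
  · -- 0 ≤ fc L for L > 0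
    intro L hL
    have h1 : (0:ℝ) ≤ 1 / (2 * L) ^ d := by positivity
    refine mul_nonneg h1 (integral_nonneg fun t => integral_nonneg fun x =>
      Real.rpow_nonneg (norm_nonneg _) _)
  · -- f' L ≤ T * B ^ p for L > 0
    intro L hL
    have hbd := t_integral_bound T (B ^ p) L hT0.le hL.le
      (Real.rpow_nonneg hB0 p) G hGcont hG0 hGB
    have h2L : (0:ℝ) < (2 * L) ^ d := by positivity
    calc (1 / (2 * L) ^ d) * ∫ t in Set.Icc (0:ℝ) T,
          ∫ x in (Set.univ.pi fun _ : Fin d => Set.Icc (-L) L),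
            ‖∑ m ∈ G₀, c (m + a) *
              Complex.exp (Complex.I *
                ((∑ i, freqVec ω m i * x i - t * ∑ i, freqVec ω m i ^ 2 : ℝ) : ℂ))‖ ^ p
        ≤ (1 / (2 * L) ^ d) * (T * ((2 * L) ^ d * B ^ p)) := by
          refine mul_le_mul_of_nonneg_left ?_ (by positivity)
          exact hbd
      _ = T * B ^ p := by field_simp
  · -- fc L ≤ ((L+M)/L)^d * f' (L+M) for L > 0
    intro L hL
    have hLM : (0:ℝ) < L + M := by linarith
    have h1 : (0:ℝ) ≤ 1 / (2 * L) ^ d := by positivity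
    have hstep := mul_le_mul_of_nonneg_left (hIcore L) h1
    refine le_trans hstep (le_of_eq ?_)
    have hpow : (1 / (2 * L) ^ d : ℝ)
        = ((L + M) / L) ^ d * (1 / (2 * (L + M)) ^ d) := by
      have hL0 : L ≠ 0 := ne_of_gt hL
      have hLM0 : L + M ≠ 0 := ne_of_gt hLM
      have h2 : (2 * (L + M)) ^ d = 2 ^ d * (L + M) ^ d := mul_pow 2 (L+M) d
      have h3 : (2 * L) ^ d = 2 ^ d * L ^ d := mul_pow 2 L d
      have h4 : ((L + M) / L) ^ d = (L + M) ^ d / L ^ d := div_pow (L+M) L d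
      rw [h2, h3, h4]
      have h5 : (L + M) ^ d ≠ 0 := pow_ne_zero d (ne_of_gt hLM)
      have h6 : L ^ d ≠ 0 := pow_ne_zero d (ne_of_gt hL)
      field_simp
    rw [hpow, mul_assoc]
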